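/- Let Z_1,...,Z_K and ε_1,...,ε_K be random variables such that all 2K variables are independent, the Z_i are i.i.d. centered Gaussian, the ε_i are i.i.d. centered Gaussian, let α ∈ ℝ, and let K ≥ 2. Then Var( (1/K) Σ_{i=1}^K (Z_i − α Z_i) ) · Var( (1/K) Σ_{i=1}^K ε_i ) ≤ Var( (1/K) Σ_{i=1}^K ε_i · ( (1/(K−1)) Σ_{j≠i} Z_j − α Z_i ) ). -/

import Mathlib

open MeasureTheory ProbabilityTheory Filter Finset Topology Real
open scoped NNReal

noncomputable section

lemma aux_mul_integrable {Ω : Type*} [MeasurableSpace Ω] {μ : Measure Ω}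
    {f g : Ω → ℝ} (hf : MemLp f 2 μ) (hg : MemLp g 2 μ) :
    Integrable (fun ω => f ω * g ω) μ := by
  have h : MemLp (f • g) 1 μ := hg.smul hf
  exact (memLp_one_iff_integrable.mp h).congr (by filter_upwards with ω; simp [mul_comm])

lemma gaussianReal_sq_integrable (v : ℝ≥0) :
    Integrable (fun x : ℝ => x ^ 2) (gaussianReal 0 v) := by
  by_cases hv : v = 0
  · subst hv
    rw [gaussianReal_zero_var]
    have h : (fun x : ℝ => x ^ 2) =ᵐ[Measure.dirac (0:ℝ)] fun _ => (0:ℝ) := by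
      rw [ae_dirac_eq]
      exact Filter.eventually_pure.mpr (by norm_num)
    exact (integrable_const (0:ℝ)).congr h.symm
  · rw [gaussianReal_of_var_ne_zero _ hv,
      integrable_withDensity_iff (measurable_gaussianPDF 0 v)
        (ae_of_all _ fun x => ENNReal.ofReal_lt_top)]
    have hvpos : (0:ℝ) < v := by positivity
    have hb : (0:ℝ) < (2 * (v:ℝ))⁻¹ := by positivity
    have key := integrable_rpow_mul_exp_neg_mul_sq hb (by norm_num : (-1:ℝ) < 2)
    have key2 := key.const_mul (Real.sqrt (2 * Real.pi * v))⁻¹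
    refine key2.congr (ae_of_all _ fun x => ?_)
    show (√(2 * π * (v:ℝ)))⁻¹ * (x ^ (2:ℝ) * rexp (-(2 * (v:ℝ))⁻¹ * x ^ 2))
      = x ^ 2 * (gaussianPDF 0 v x).toReal
    rw [gaussianPDF, ENNReal.toReal_ofReal (gaussianPDFReal_nonneg 0 v x)]
    have hx : x ^ (2:ℝ) = x ^ 2 := by
      rw [show (2:ℝ) = ((2:ℕ):ℝ) by norm_num, Real.rpow_natCast]
    rw [hx]
    unfold gaussianPDFReal
    rw [show -(x - 0) ^ 2 / (2 * (v:ℝ)) = -(2 * (v:ℝ))⁻¹ * x ^ 2 by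
      rw [sub_zero]; field_simp]
    ring

lemma gaussianReal_memLp_two (v : ℝ≥0) : MemLp (id : ℝ → ℝ) 2 (gaussianReal 0 v) :=
  (memLp_two_iff_integrable_sq aestronglyMeasurable_id).mpr
    (by simpa using gaussianReal_sq_integrable v)

lemma gaussianReal_integral_id_zero (v : ℝ≥0) : ∫ x, x ∂(gaussianReal 0 v) = 0 := by
  have hsymm : (gaussianReal 0 v).map (fun x => (-1:ℝ) * x) = gaussianReal 0 v := by
    rw [gaussianReal_map_const_mul]
    norm_num
  have h : ∫ x, x ∂(gaussianReal 0 v) = ∫ x, (-1:ℝ) * x ∂(gaussianReal 0 v) := by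
    conv_lhs => rw [← hsymm]
    have hφ : AEMeasurable (fun x : ℝ => (-1:ℝ) * x) (gaussianReal 0 v) := by fun_prop
    have hsm : AEStronglyMeasurable (fun x : ℝ => x)
        ((gaussianReal 0 v).map (fun x : ℝ => (-1:ℝ) * x)) := aestronglyMeasurable_id
    rw [integral_map hφ hsm]
  simp only [neg_one_mul] at h
  rw [integral_neg] at h
  linarith

/-- **Cross-term inequality from the proof of Lemma 1.** Let `Z_1, …, Z_K` and
`ε_1, …, ε_K` be such that all `2K` variables are mutually independent, the `Z_i`
are i.i.d. centered Gaussian, the `ε_i` are i.i.d. centered Gaussian, `α ∈ ℝ`,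
`K ≥ 2`. Then
`Var((1/K)Σᵢ(Zᵢ − αZᵢ)) · Var((1/K)Σᵢ εᵢ)
  ≤ Var((1/K)Σᵢ εᵢ·((1/(K−1))Σ_{j≠i} Zⱼ − αZᵢ))`. -/
theorem variance_crossterm_ineq_gaussian
    {Ω : Type*} [MeasurableSpace Ω] (μ : Measure Ω) [IsProbabilityMeasure μ]
    (K : ℕ) (hK : 2 ≤ K) (Z ε : Fin K → Ω → ℝ) (α : ℝ)
    (measZ : ∀ i, Measurable (Z i)) (measε : ∀ i, Measurable (ε i))
    (hindep : iIndepFun (Sum.elim Z ε) μ)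
    (vZ vε : ℝ≥0)
    (hgaussZ : ∀ i, μ.map (Z i) = gaussianReal 0 vZ)
    (hgaussε : ∀ i, μ.map (ε i) = gaussianReal 0 vε) :
    variance (fun ω => (K : ℝ)⁻¹ * ∑ i, (Z i ω - α * Z i ω)) μ *
        variance (fun ω => (K : ℝ)⁻¹ * ∑ i, ε i ω) μ ≤
      variance (fun ω => (K : ℝ)⁻¹ * ∑ i, ε i ω *
        (((K : ℝ) - 1)⁻¹ * ∑ j ∈ Finset.univ.erase i, Z j ω - α * Z i ω)) μ := by
  classical
  have hk2 : (2:ℝ) ≤ (K:ℝ) := by exact_mod_cast hK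
  have hkpos : (0:ℝ) < K := by linarith
  have hK1 : (1:ℝ) ≤ (K:ℝ) - 1 := by linarith
  have hKne : ((K:ℝ) - 1) ≠ 0 := by linarith
  set MZ : ℝ := ∫ x, x ^ 2 ∂(gaussianReal 0 vZ) with hMZdef
  set Mε : ℝ := ∫ x, x ^ 2 ∂(gaussianReal 0 vε) with hMεdef
  have hMZ0 : 0 ≤ MZ := integral_nonneg fun x => sq_nonneg x
  have hMε0 : 0 ≤ Mε := integral_nonneg fun x => sq_nonneg x
  have haeZ : ∀ i, AEMeasurable (Z i) μ := fun i => (measZ i).aemeasurable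
  have haeε : ∀ i, AEMeasurable (ε i) μ := fun i => (measε i).aemeasurable
  -- L² membership
  have hZ2 : ∀ i, MemLp (Z i) 2 μ := fun i => by
    have h := gaussianReal_memLp_two vZ
    rw [← hgaussZ i] at h
    exact (memLp_map_measure_iff aestronglyMeasurable_id (haeZ i)).mp h
  have hε2 : ∀ i, MemLp (ε i) 2 μ := fun i => by
    have h := gaussianReal_memLp_two vε
    rw [← hgaussε i] at h
    exact (memLp_map_measure_iff aestronglyMeasurable_id (haeε i)).mp h
  -- means and second moments
  have hZmean : ∀ i, ∫ ω, Z i ω ∂μ = 0 := fun i => by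
    have hsm : AEStronglyMeasurable (fun x : ℝ => x) (μ.map (Z i)) := aestronglyMeasurable_id
    have h := (integral_map (haeZ i) hsm).symm
    rw [h, hgaussZ i, gaussianReal_integral_id_zero]
  have hεmean : ∀ i, ∫ ω, ε i ω ∂μ = 0 := fun i => by
    have hsm : AEStronglyMeasurable (fun x : ℝ => x) (μ.map (ε i)) := aestronglyMeasurable_id
    have h := (integral_map (haeε i) hsm).symm
    rw [h, hgaussε i, gaussianReal_integral_id_zero]
  have hZsq : ∀ i, ∫ ω, Z i ω ^ 2 ∂μ = MZ := fun i => by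
    have hsm : AEStronglyMeasurable (fun x : ℝ => x ^ 2) (μ.map (Z i)) :=
      (continuous_pow 2).aestronglyMeasurable
    have h := (integral_map (haeZ i) hsm).symm
    rw [h, hgaussZ i]
  have hεsq : ∀ i, ∫ ω, ε i ω ^ 2 ∂μ = Mε := fun i => by
    have hsm : AEStronglyMeasurable (fun x : ℝ => x ^ 2) (μ.map (ε i)) :=
      (continuous_pow 2).aestronglyMeasurable
    have h := (integral_map (haeε i) hsm).symm
    rw [h, hgaussε i]
  have hZvar : ∀ i, variance (Z i) μ = MZ := fun i => by
    rw [variance_eq_sub (hZ2 i)]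
    show (∫ ω, Z i ω ^ 2 ∂μ) - (∫ ω, Z i ω ∂μ) ^ 2 = MZ
    rw [hZsq i, hZmean i]; ring
  have hεvar : ∀ i, variance (ε i) μ = Mε := fun i => by
    rw [variance_eq_sub (hε2 i)]
    show (∫ ω, ε i ω ^ 2 ∂μ) - (∫ ω, ε i ω ∂μ) ^ 2 = Mε
    rw [hεsq i, hεmean i]; ring
  -- measurability of the joint family, pairwise independence
  have measF : ∀ i, Measurable (Sum.elim Z ε i) := fun i => by
    cases i with
    | inl j => exact measZ j
    | inr j => exact measε j
  have hZZ : ∀ i j, i ≠ j → IndepFun (Z i) (Z j) μ := fun i j hij =>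
    hindep.indepFun (show (Sum.inl i : Fin K ⊕ Fin K) ≠ Sum.inl j by simpa using hij)
  have hεε : ∀ i j, i ≠ j → IndepFun (ε i) (ε j) μ := fun i j hij =>
    hindep.indepFun (show (Sum.inr i : Fin K ⊕ Fin K) ≠ Sum.inr j by simpa using hij)
  -- the W functions
  set W : Fin K → Ω → ℝ := fun i ω =>
    ((K : ℝ) - 1)⁻¹ * ∑ j ∈ Finset.univ.erase i, Z j ω - α * Z i ω with hWdef
  set c : Fin K → Fin K → ℝ := fun i k => if k = i then -α else ((K:ℝ)-1)⁻¹ with hcdef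
  have hWsum : ∀ i, W i = ∑ k, fun ω => c i k * Z k ω := fun i => by
    funext ω
    rw [Finset.sum_apply]
    show ((K : ℝ) - 1)⁻¹ * ∑ j ∈ Finset.univ.erase i, Z j ω - α * Z i ω
      = ∑ k, c i k * Z k ω
    have h2 : ∀ k ∈ Finset.univ.erase i, c i k * Z k ω = ((K:ℝ)-1)⁻¹ * Z k ω :=
      fun k hk => by
        simp only [hcdef]; rw [if_neg (Finset.ne_of_mem_erase hk)]
    rw [← Finset.add_sum_erase _ _ (Finset.mem_univ i), Finset.sum_congr rfl h2,
      ← Finset.mul_sum]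
    simp only [hcdef, if_pos rfl]
    ring
  have hWmem : ∀ i, MemLp (W i) 2 μ := fun i => by
    rw [hWsum i]
    exact memLp_finset_sum' _ fun k _ => (hZ2 k).const_mul _
  have hWmean : ∀ i, ∫ ω, W i ω ∂μ = 0 := fun i => by
    have : W i = ∑ k, fun ω => c i k * Z k ω := hWsum i
    rw [show (fun ω => W i ω) = W i from rfl, this]
    rw [show (∫ ω, (∑ k, fun ω' => c i k * Z k ω') ω ∂μ)
        = ∫ ω, ∑ k, c i k * Z k ω ∂μ by
      congr 1; funext ω; rw [Finset.sum_apply]]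
    rw [integral_finset_sum _ (fun k _ =>
      (((hZ2 k).integrable one_le_two).const_mul _))]
    simp [integral_const_mul, hZmean]
  have hcsum : ∀ i : Fin K, ∑ k, c i k ^ 2 = ((K:ℝ)-1)⁻¹ + α ^ 2 := fun i => by
    have h2 : ∀ k ∈ Finset.univ.erase i, c i k ^ 2 = (((K:ℝ)-1)⁻¹) ^ 2 :=
      fun k hk => by
        simp only [hcdef]; rw [if_neg (Finset.ne_of_mem_erase hk)]
    rw [← Finset.add_sum_erase _ _ (Finset.mem_univ i), Finset.sum_congr rfl h2,
      Finset.sum_const, Finset.card_erase_of_mem (Finset.mem_univ i),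
      Finset.card_univ, Fintype.card_fin]
    simp only [hcdef, if_pos rfl]
    have hcast : ((K - 1 : ℕ) : ℝ) = (K:ℝ) - 1 := by
      have : (1:ℕ) ≤ K := le_trans one_le_two hK
      push_cast [Nat.cast_sub this]
      ring
    rw [nsmul_eq_mul, hcast]
    field_simp
    ring
  have hWvar : ∀ i, variance (W i) μ = (((K:ℝ)-1)⁻¹ + α^2) * MZ := fun i => by
    rw [hWsum i, IndepFun.variance_sum (fun k _ => (hZ2 k).const_mul _)
      (fun k _ l hl hkl => (hZZ k l hkl).comp
        (measurable_const_mul _) (measurable_const_mul _))]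
    have h2 : ∀ k ∈ (Finset.univ : Finset (Fin K)),
        variance (fun ω => c i k * Z k ω) μ = c i k ^ 2 * MZ :=
      fun k _ => by rw [variance_const_mul, hZvar k]
    rw [Finset.sum_congr rfl h2, ← Finset.sum_mul, hcsum i]
  have hWsq : ∀ i, ∫ ω, W i ω ^ 2 ∂μ = (((K:ℝ)-1)⁻¹ + α^2) * MZ := fun i => by
    have h := variance_eq_sub (hWmem i)
    rw [hWvar i] at h
    have h2 : (∫ ω, W i ω ^ 2 ∂μ) - (∫ ω, W i ω ∂μ) ^ 2
        = (((K:ℝ)-1)⁻¹ + α^2) * MZ := h.symm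
    rw [hWmean i] at h2
    linarith
  -- key independence: any pair of ε's is independent of the whole Z vector
  set w : Fin K → (Fin K → ℝ) → ℝ := fun i v =>
    ((K : ℝ) - 1)⁻¹ * ∑ j ∈ Finset.univ.erase i, v j - α * v i with hwdef
  have hwm : ∀ i, Measurable (w i) := fun i =>
    ((measurable_const.mul (Finset.measurable_sum _ fun j _ => measurable_pi_apply j)).sub
      (measurable_const.mul (measurable_pi_apply i)))
  have hkey : ∀ i j : Fin K,
      IndepFun (fun ω => (ε i ω, ε j ω)) (fun ω (k : Fin K) => Z k ω) μ := by
    intro i j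
    have hd : Disjoint ({Sum.inr i, Sum.inr j} : Finset (Fin K ⊕ Fin K))
        (Finset.univ.image Sum.inl) := by
      simp only [Finset.disjoint_left, Finset.mem_insert, Finset.mem_singleton,
        Finset.mem_image]
      rintro x (rfl | rfl) ⟨y, -, h⟩ <;> exact Sum.inl_ne_inr h
    have h := hindep.indepFun_finset _ _ hd measF
    have hφ : Measurable (fun v : ((x : ({Sum.inr i, Sum.inr j} :
        Finset (Fin K ⊕ Fin K))) → ℝ) =>
        (v ⟨Sum.inr i, by simp⟩, v ⟨Sum.inr j, by simp⟩)) :=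
      (measurable_pi_apply _).prodMk (measurable_pi_apply _)
    have hψ : Measurable (fun v : ((x : (Finset.univ.image (Sum.inl :
        Fin K → Fin K ⊕ Fin K))) → ℝ) => fun k : Fin K => v ⟨Sum.inl k, by simp⟩) :=
      measurable_pi_lambda _ fun k => measurable_pi_apply _
    exact h.comp hφ hψ
  have hεW : ∀ i j, IndepFun (fun ω => ε i ω * ε j ω) (fun ω => W i ω * W j ω) μ :=
    fun i j => by
      have h := (hkey i j).comp (measurable_fst.mul measurable_snd)
        ((hwm i).mul (hwm j))
      exact h
  have hεiW : ∀ i, IndepFun (ε i) (W i) μ := fun i => by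
    have h := (hkey i i).comp (measurable_fst (β := ℝ)) (hwm i)
    exact h
  -- the summands X i = ε i * W i
  set X : Fin K → Ω → ℝ := fun i ω => ε i ω * W i ω with hXdef
  have hWmeas : ∀ i, Measurable (W i) := fun i =>
    ((measurable_const.mul (Finset.measurable_sum _ fun j _ => measZ j)).sub
      (measurable_const.mul (measZ i)))
  have hεint : ∀ i, Integrable (ε i) μ := fun i => (hε2 i).integrable one_le_two
  have hWint : ∀ i, Integrable (W i) μ := fun i => (hWmem i).integrable one_le_two
  have hXint : ∀ i, Integrable (X i) μ := fun i =>
    (hεiW i).integrable_mul (hεint i) (hWint i)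
  have hXmean : ∀ i, ∫ ω, X i ω ∂μ = 0 := fun i => by
    have h := (hεiW i).integral_mul_eq_mul_integral (hεint i).1 (hWint i).1
    have h2 : ∫ ω, X i ω ∂μ = (∫ ω, ε i ω ∂μ) * ∫ ω, W i ω ∂μ := h
    rw [h2, hεmean i, zero_mul]
  have hXXint : ∀ i j, Integrable (fun ω => X i ω * X j ω) μ := fun i j => by
    have h1 : Integrable (fun ω => ε i ω * ε j ω) μ :=
      aux_mul_integrable (hε2 i) (hε2 j)
    have h2 : Integrable (fun ω => W i ω * W j ω) μ :=
      aux_mul_integrable (hWmem i) (hWmem j)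
    have h := (hεW i j).integrable_mul h1 h2
    exact h.congr (Filter.Eventually.of_forall fun ω => by
      show (ε i ω * ε j ω) * (W i ω * W j ω) = X i ω * X j ω
      simp only [hXdef]; ring)
  have hXX : ∀ i j, ∫ ω, X i ω * X j ω ∂μ
      = (∫ ω, ε i ω * ε j ω ∂μ) * ∫ ω, W i ω * W j ω ∂μ := fun i j => by
    have h1 : Integrable (fun ω => ε i ω * ε j ω) μ :=
      aux_mul_integrable (hε2 i) (hε2 j)
    have h2 : Integrable (fun ω => W i ω * W j ω) μ :=
      aux_mul_integrable (hWmem i) (hWmem j)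
    have h := (hεW i j).integral_mul_eq_mul_integral h1.1 h2.1
    have h3 : ∫ ω, X i ω * X j ω ∂μ = ∫ ω, (ε i ω * ε j ω) * (W i ω * W j ω) ∂μ :=
      integral_congr_ae (Filter.Eventually.of_forall fun ω => by
        simp only [hXdef]; ring)
    rw [h3]
    exact h
  have hcross : ∀ i j, i ≠ j → ∫ ω, X i ω * X j ω ∂μ = 0 := fun i j hij => by
    rw [hXX i j]
    have h := (hεε i j hij).integral_mul_eq_mul_integral (hεint i).1 (hεint j).1
    have h2 : ∫ ω, ε i ω * ε j ω ∂μ = (∫ ω, ε i ω ∂μ) * ∫ ω, ε j ω ∂μ := h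
    rw [h2, hεmean i]
    ring
  have hdiag : ∀ i, ∫ ω, X i ω * X i ω ∂μ = Mε * ((((K:ℝ)-1)⁻¹ + α^2) * MZ) :=
    fun i => by
      rw [hXX i i]
      have h1 : ∫ ω, ε i ω * ε i ω ∂μ = Mε := by
        rw [show (fun ω => ε i ω * ε i ω) = fun ω => ε i ω ^ 2 by funext ω; ring,
          hεsq i]
      have h2 : ∫ ω, W i ω * W i ω ∂μ = (((K:ℝ)-1)⁻¹ + α^2) * MZ := by
        rw [show (fun ω => W i ω * W i ω) = fun ω => W i ω ^ 2 by funext ω; ring,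
          hWsq i]
      rw [h1, h2]
  have hXmem : ∀ i, MemLp (X i) 2 μ := fun i => by
    refine (memLp_two_iff_integrable_sq
      ((measε i).mul (hWmeas i)).aestronglyMeasurable).mpr ?_
    have hsq : IndepFun (fun ω => ε i ω ^ 2) (fun ω => W i ω ^ 2) μ :=
      (hεiW i).comp (measurable_id.pow_const 2) (measurable_id.pow_const 2)
    have h := hsq.integrable_mul ((hε2 i).integrable_sq) ((hWmem i).integrable_sq)
    exact h.congr (Filter.Eventually.of_forall fun ω => by
      show ε i ω ^ 2 * W i ω ^ 2 = X i ω ^ 2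
      simp only [hXdef]; ring)
  -- the sum T
  set T : Ω → ℝ := fun ω => ∑ i, X i ω with hTdef
  have hTfun : T = ∑ i, X i := by
    funext ω; rw [Finset.sum_apply]
  have hTmem : MemLp T 2 μ := by
    rw [hTfun]; exact memLp_finset_sum' _ fun i _ => hXmem i
  have hTmean : ∫ ω, T ω ∂μ = 0 := by
    have h : ∫ ω, ∑ i, X i ω ∂μ = ∑ i, ∫ ω, X i ω ∂μ :=
      integral_finset_sum _ fun i _ => hXint i
    rw [show (fun ω => T ω) = fun ω => ∑ i, X i ω from rfl, h]
    simp [hXmean]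
  have hTsq : ∫ ω, T ω ^ 2 ∂μ = (K:ℝ) * (Mε * ((((K:ℝ)-1)⁻¹ + α^2) * MZ)) := by
    have hexp : (fun ω => T ω ^ 2) = fun ω => ∑ i, ∑ j, X i ω * X j ω := by
      funext ω
      show (∑ i, X i ω) ^ 2 = ∑ i, ∑ j, X i ω * X j ω
      rw [sq, Finset.sum_mul_sum]
    rw [hexp, integral_finset_sum _ (fun i _ =>
      integrable_finset_sum _ fun j _ => hXXint i j)]
    have hinner : ∀ i ∈ (Finset.univ : Finset (Fin K)),
        ∫ ω, ∑ j, X i ω * X j ω ∂μ = Mε * ((((K:ℝ)-1)⁻¹ + α^2) * MZ) := by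
      intro i _
      rw [integral_finset_sum _ fun j _ => hXXint i j]
      rw [Finset.sum_eq_single_of_mem i (Finset.mem_univ i)
        (fun j _ hji => hcross i j (fun h => hji h.symm))]
      exact hdiag i
    rw [Finset.sum_congr rfl hinner, Finset.sum_const, Finset.card_univ,
      Fintype.card_fin, nsmul_eq_mul]
  have hTvar : variance T μ = (K:ℝ) * (Mε * ((((K:ℝ)-1)⁻¹ + α^2) * MZ)) := by
    rw [variance_eq_sub hTmem]
    show (∫ ω, T ω ^ 2 ∂μ) - (∫ ω, T ω ∂μ) ^ 2 = _
    rw [hTsq, hTmean]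
    ring
  -- the three variances in the statement
  have hvar1 : variance (fun ω => (K : ℝ)⁻¹ * ∑ i, (Z i ω - α * Z i ω)) μ
      = ((K:ℝ)⁻¹ * (1 - α)) ^ 2 * ((K:ℝ) * MZ) := by
    have heq : (fun ω => (K : ℝ)⁻¹ * ∑ i, (Z i ω - α * Z i ω))
        = fun ω => ((K:ℝ)⁻¹ * (1 - α)) * (∑ i, Z i) ω := by
      funext ω
      rw [Finset.sum_apply]
      have h : ∑ i, (Z i ω - α * Z i ω) = (1 - α) * ∑ i, Z i ω := by
        rw [Finset.mul_sum]
        exact Finset.sum_congr rfl fun i _ => by ring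
      rw [h]
      ring
    rw [heq, variance_const_mul]
    have h : variance (∑ i, Z i) μ = ∑ i, variance (Z i) μ :=
      IndepFun.variance_sum (fun i _ => hZ2 i) (fun i _ j _ hij => hZZ i j hij)
    rw [h, Finset.sum_congr rfl fun i _ => hZvar i, Finset.sum_const,
      Finset.card_univ, Fintype.card_fin, nsmul_eq_mul]
  have hvar2 : variance (fun ω => (K : ℝ)⁻¹ * ∑ i, ε i ω) μ
      = ((K:ℝ)⁻¹) ^ 2 * ((K:ℝ) * Mε) := by
    have heq : (fun ω => (K : ℝ)⁻¹ * ∑ i, ε i ω)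
        = fun ω => (K:ℝ)⁻¹ * (∑ i, ε i) ω := by
      funext ω; rw [Finset.sum_apply]
    rw [heq, variance_const_mul]
    have h : variance (∑ i, ε i) μ = ∑ i, variance (ε i) μ :=
      IndepFun.variance_sum (fun i _ => hε2 i) (fun i _ j _ hij => hεε i j hij)
    rw [h, Finset.sum_congr rfl fun i _ => hεvar i, Finset.sum_const,
      Finset.card_univ, Fintype.card_fin, nsmul_eq_mul]
  have hvar3 : variance (fun ω => (K : ℝ)⁻¹ * ∑ i, ε i ω *
        (((K : ℝ) - 1)⁻¹ * ∑ j ∈ Finset.univ.erase i, Z j ω - α * Z i ω)) μ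
      = ((K:ℝ)⁻¹) ^ 2 * ((K:ℝ) * (Mε * ((((K:ℝ)-1)⁻¹ + α^2) * MZ))) := by
    have heq : (fun ω => (K : ℝ)⁻¹ * ∑ i, ε i ω *
        (((K : ℝ) - 1)⁻¹ * ∑ j ∈ Finset.univ.erase i, Z j ω - α * Z i ω))
        = fun ω => (K:ℝ)⁻¹ * T ω := rfl
    rw [heq, variance_const_mul, hTvar]
  rw [hvar1, hvar2, hvar3]
  -- final algebra
  have hku : (K:ℝ)⁻¹ * (K:ℝ) = 1 := inv_mul_cancel₀ (ne_of_gt hkpos)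
  have hv' : ((K:ℝ) - 1) * ((K:ℝ) - 1)⁻¹ = 1 := mul_inv_cancel₀ hKne
  have core : (1 - α) ^ 2 ≤ (K:ℝ) * (((K:ℝ)-1)⁻¹ + α ^ 2) := by
    nlinarith [sq_nonneg (1 + ((K:ℝ) - 1) * α), hv', hK1,
      sq_nonneg (((K:ℝ) - 1) * α)]
  have hnn : 0 ≤ ((K:ℝ)⁻¹) ^ 2 * MZ * Mε :=
    mul_nonneg (mul_nonneg (sq_nonneg _) hMZ0) hMε0
  calc ((K:ℝ)⁻¹ * (1 - α)) ^ 2 * ((K:ℝ) * MZ) * (((K:ℝ)⁻¹) ^ 2 * ((K:ℝ) * Mε))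
      = (1 - α) ^ 2 * (((K:ℝ)⁻¹) ^ 2 * MZ * Mε) * (((K:ℝ)⁻¹ * (K:ℝ))
        * ((K:ℝ)⁻¹ * (K:ℝ))) := by ring
    _ = (1 - α) ^ 2 * (((K:ℝ)⁻¹) ^ 2 * MZ * Mε) := by rw [hku]; ring
    _ ≤ ((K:ℝ) * (((K:ℝ)-1)⁻¹ + α ^ 2)) * (((K:ℝ)⁻¹) ^ 2 * MZ * Mε) :=
        mul_le_mul_of_nonneg_right core hnn
    _ = ((K:ℝ)⁻¹) ^ 2 * ((K:ℝ) * (Mε * ((((K:ℝ)-1)⁻¹ + α^2) * MZ))) := by ring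

end
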